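/- arXiv:2303.02725 — 3 statements merged into one kernel-verified Lean document; each statement's English description precedes it below -/
import Mathlib

section
/- Let dθ, dr be natural numbers, n a natural number with n ≥ 1, and let λ > 0 and L > 0. Let E_θ = ℝ^{dθ}, E_r = ℝ^{dr} be Euclidean spaces, J : E_θ → E_r → ℝ, J₀ : E_θ → ℝ, θ ∈ E_θ, S ∈ E_θ, r ∈ E_r. Define G(r') := gradient of θ' ↦ J(θ', r') at θ, Agg(r') := (1/n)·(S + θ + λ·G(r')), and Φ := J₀ ∘ Agg. Let g := gradient of r' ↦ J(θ, r') at r, assume g ≠ 0, and set v := g/‖g‖. Assume: G is differentiable at r with derivative M; J₀ is differentiable at Agg(r); Φ is differentiable with L-Lipschitz gradient; and B := ⟪∇J₀(Agg(r)), M(v)⟫ > 0. Then for every ε with 0 < ε < 2λB/(nL), the poisoned reward r̂ := r − ε·v satisfies J₀(Agg(r̂)) < J₀(Agg(r)); that is, the poisoned global objective is strictly smaller than the clean global objective. -/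
open scoped RealInnerProductSpace

open InnerProductSpace

/-- Descent lemma: a differentiable function with `L`-Lipschitz gradient satisfies
`f (x + w) ≤ f x + ⟪∇f x, w⟫ + L/2 * ‖w‖²`. -/
lemma descent_lemma_aux {E : Type*} [NormedAddCommGroup E] [InnerProductSpace ℝ E]
    [CompleteSpace E] (f : E → ℝ) (hf : Differentiable ℝ f) (L : ℝ) (hL : 0 ≤ L)
    (hlip : LipschitzWith L.toNNReal (gradient f)) (x w : E) :
    f (x + w) ≤ f x + ⟪gradient f x, w⟫ + L / 2 * ‖w‖ ^ 2 := by
  have hline : ∀ t : ℝ, HasDerivAt (fun s : ℝ => x + s • w) w t := by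
    intro t
    simpa using ((hasDerivAt_id t).smul_const w).const_add x
  have hψ : ∀ t : ℝ, HasDerivAt (fun s : ℝ => f (x + s • w))
      ⟪gradient f (x + t • w), w⟫ t := by
    intro t
    have h1 := ((hf (x + t • w)).hasGradientAt).hasFDerivAt
    simpa [toDual_apply_apply, Function.comp_def] using h1.comp_hasDerivAt t (hline t)
  have hcont : Continuous fun t : ℝ => ⟪gradient f (x + t • w), w⟫ := by
    exact Continuous.inner
      (hlip.continuous.comp (continuous_const.add (continuous_id.smul continuous_const)))
      continuous_const
  have key : f (x + w) - f x = ∫ t in (0:ℝ)..1, ⟪gradient f (x + t • w), w⟫ := by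
    have := intervalIntegral.integral_eq_sub_of_hasDerivAt
      (f := fun s : ℝ => f (x + s • w)) (fun t _ => hψ t)
      (hcont.intervalIntegrable 0 1)
    simpa using this.symm
  set c := ⟪gradient f x, w⟫ with hc
  have hbound : ∀ t ∈ Set.Icc (0:ℝ) 1,
      ⟪gradient f (x + t • w), w⟫ ≤ c + L * ‖w‖ ^ 2 * t := by
    intro t ht
    have h1 : ⟪gradient f (x + t • w) - gradient f x, w⟫
        ≤ ‖gradient f (x + t • w) - gradient f x‖ * ‖w‖ := real_inner_le_norm _ _
    have h2 : ‖gradient f (x + t • w) - gradient f x‖ ≤ L * (t * ‖w‖) := by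
      have h3 := hlip.dist_le_mul (x + t • w) x
      rw [dist_eq_norm, dist_eq_norm] at h3
      have h4 : x + t • w - x = t • w := by abel
      rw [h4, norm_smul, Real.norm_eq_abs, abs_of_nonneg ht.1,
        Real.coe_toNNReal L hL] at h3
      exact h3
    have h5 : ⟪gradient f (x + t • w), w⟫ - c
        = ⟪gradient f (x + t • w) - gradient f x, w⟫ := by
      rw [inner_sub_left]
    nlinarith [norm_nonneg w, ht.1, h1, h2, h5]
  have hint : f (x + w) - f x ≤ ∫ t in (0:ℝ)..1, (c + L * ‖w‖ ^ 2 * t) := by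
    rw [key]
    exact intervalIntegral.integral_mono_on zero_le_one
      (hcont.intervalIntegrable 0 1)
      ((continuous_const.add (continuous_const.mul continuous_id)).intervalIntegrable 0 1)
      hbound
  have hval : ∫ t in (0:ℝ)..1, (c + L * ‖w‖ ^ 2 * t) = c + L / 2 * ‖w‖ ^ 2 := by
    rw [intervalIntegral.integral_add intervalIntegrable_const
      ((intervalIntegral.intervalIntegrable_id).const_mul (L * ‖w‖ ^ 2)),
      intervalIntegral.integral_const_mul, integral_id]
    simp
    ring
  rw [hval] at hint
  linarith

/-- Theorem 1 of the paper: in the FRL setting with single-step local training,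
a single poisoned agent, and FedAVG aggregation, if `B > 0` and the attack budget
satisfies `0 < ε < 2λB/(nL)`, then the poisoned global objective is strictly smaller
than the clean global objective. -/
theorem stmt_7 (dθ dr : ℕ) (n : ℕ) (hn : 1 ≤ n) (lam L : ℝ)
    (hlam : 0 < lam) (hL : 0 < L)
    (J : EuclideanSpace ℝ (Fin dθ) → EuclideanSpace ℝ (Fin dr) → ℝ)
    (J₀ : EuclideanSpace ℝ (Fin dθ) → ℝ)
    (θ S : EuclideanSpace ℝ (Fin dθ)) (r : EuclideanSpace ℝ (Fin dr))
    (G : EuclideanSpace ℝ (Fin dr) → EuclideanSpace ℝ (Fin dθ))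
    (hG : ∀ r', G r' = gradient (fun θ' => J θ' r') θ)
    (Agg : EuclideanSpace ℝ (Fin dr) → EuclideanSpace ℝ (Fin dθ))
    (hAgg : ∀ r', Agg r' = (n : ℝ)⁻¹ • (S + θ + lam • G r'))
    (Φ : EuclideanSpace ℝ (Fin dr) → ℝ) (hΦ : Φ = J₀ ∘ Agg)
    (g : EuclideanSpace ℝ (Fin dr))
    (hg : g = gradient (fun r' => J θ r') r) (hg0 : g ≠ 0)
    (v : EuclideanSpace ℝ (Fin dr)) (hv : v = ‖g‖⁻¹ • g)
    (M : EuclideanSpace ℝ (Fin dr) →L[ℝ] EuclideanSpace ℝ (Fin dθ))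
    (hM : HasFDerivAt G M r)
    (hJ₀ : DifferentiableAt ℝ J₀ (Agg r))
    (hΦdiff : Differentiable ℝ Φ)
    (hΦlip : LipschitzWith L.toNNReal (gradient Φ))
    (B : ℝ) (hB : B = ⟪gradient J₀ (Agg r), M v⟫) (hBpos : 0 < B) :
    ∀ ε : ℝ, 0 < ε → ε < 2 * lam * B / (n * L) →
      J₀ (Agg (r - ε • v)) < J₀ (Agg r) := by
  intro ε hε hεlt
  have hnpos : (0:ℝ) < n := by exact_mod_cast hn
  have hv1 : ‖v‖ = 1 := by
    rw [hv, norm_smul, norm_inv, norm_norm]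
    exact inv_mul_cancel₀ (norm_ne_zero_iff.2 hg0)
  set w : EuclideanSpace ℝ (Fin dr) := -(ε • v) with hwdef
  have hrw : r + w = r - ε • v := by rw [hwdef]; abel
  have hnormw : ‖w‖ = ε := by
    rw [hwdef, norm_neg, norm_smul, hv1, Real.norm_eq_abs, abs_of_pos hε, mul_one]
  -- derivative of Agg
  have hAggF : Agg = fun r' => (n : ℝ)⁻¹ • (S + θ + lam • G r') := funext hAgg
  have hAgg' : HasFDerivAt Agg ((n:ℝ)⁻¹ • lam • M) r := by
    rw [hAggF]
    exact ((hM.const_smul lam).const_add (S + θ)).const_smul ((n:ℝ)⁻¹)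
  have hJ₀F : HasFDerivAt J₀ (toDual ℝ _ (gradient J₀ (Agg r))) (Agg r) :=
    hJ₀.hasGradientAt.hasFDerivAt
  have hΦF : HasFDerivAt Φ
      ((toDual ℝ _ (gradient J₀ (Agg r))).comp ((n:ℝ)⁻¹ • lam • M)) r := by
    rw [hΦ]; exact hJ₀F.comp r hAgg'
  have hgradΦ : ⟪gradient Φ r, w⟫ = (n:ℝ)⁻¹ * (lam * (-(ε * B))) := by
    have h1 : ⟪gradient Φ r, w⟫ = fderiv ℝ Φ r w := by
      rw [gradient, toDual_symm_apply]
    rw [h1, hΦF.fderiv]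
    have hMw : M w = -(ε • M v) := by
      rw [hwdef]; simp
    simp only [ContinuousLinearMap.comp_apply, ContinuousLinearMap.coe_smul',
      Pi.smul_apply, toDual_apply_apply, hMw, map_smul, map_neg, smul_eq_mul,
      inner_neg_right, real_inner_smul_right, hB]
  have hdesc := descent_lemma_aux Φ hΦdiff L hL.le hΦlip r w
  rw [hgradΦ, hnormw] at hdesc
  have hΦval : ∀ x, Φ x = J₀ (Agg x) := by intro x; rw [hΦ]; rfl
  rw [hrw, hΦval, hΦval] at hdesc
  have h2 : ε * (↑n * L) < 2 * lam * B := (lt_div_iff₀ (by positivity)).mp hεlt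
  have h3 : (n:ℝ)⁻¹ * (lam * (-(ε * B))) + L / 2 * ε ^ 2 < 0 := by
    have heq : (n:ℝ)⁻¹ * (lam * (-(ε * B))) + L / 2 * ε ^ 2
        = -((2 * lam * B - ε * (↑n * L)) * (ε / (2 * ↑n))) := by
      field_simp
      ring
    rw [heq]
    exact neg_lt_zero.mpr (mul_pos (sub_pos.mpr h2)
      (div_pos hε (by positivity)))
  linarith
end

section
/- In the setting of Theorem 1 (n ≥ 1 agents, learning rate λ > 0, J : E_θ → E_r → ℝ, J₀ : E_θ → ℝ, θ, S, r given; G(r') := gradient of θ' ↦ J(θ', r') at θ, Agg(r') := (1/n)·(S + θ + λ·G(r')), Φ := J₀ ∘ Agg, g := gradient of r' ↦ J(θ, r') at r nonzero, v := g/‖g‖, G differentiable at r with derivative M, J₀ differentiable at Agg(r), Φ differentiable with L-Lipschitz gradient for L > 0, B := ⟪∇J₀(Agg(r)), M(v)⟫), for every ε ∈ ℝ the poisoned reward r̂ := r − ε·v satisfies the quantitative bound J₀(Agg(r̂)) ≤ J₀(Agg(r)) − ε·(λB/n) + (L/2)·ε². -/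
open scoped RealInnerProductSpace

lemma descent_lemma {d : ℕ} (f : EuclideanSpace ℝ (Fin d) → ℝ) (L : ℝ) (hL : 0 ≤ L)
    (hdiff : Differentiable ℝ f) (hlip : LipschitzWith L.toNNReal (gradient f))
    (x h : EuclideanSpace ℝ (Fin d)) :
    f (x + h) ≤ f x + ⟪gradient f x, h⟫ + L / 2 * ‖h‖ ^ 2 := by
  have key : ∀ y, HasFDerivAt f (InnerProductSpace.toDual ℝ _ (gradient f y)) y :=
    fun y => hasGradientAt_iff_hasFDerivAt.mp (hdiff y).hasGradientAt
  have hline : ∀ t : ℝ, HasDerivAt (fun t : ℝ => x + t • h) h t := by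
    intro t
    simpa using ((hasDerivAt_id t).smul_const h).const_add x
  have hchain : ∀ t : ℝ,
      HasDerivAt (fun t : ℝ => f (x + t • h)) ⟪gradient f (x + t • h), h⟫ t := by
    intro t
    have := (key (x + t • h)).comp_hasDerivAt t (hline t)
    simpa [InnerProductSpace.toDual_apply_apply, Function.comp_def] using this
  have hgradcont : Continuous (gradient f) := hlip.continuous
  have hcont : Continuous (fun t : ℝ => (⟪gradient f (x + t • h), h⟫ : ℝ)) := by
    exact (hgradcont.comp (by continuity)).inner continuous_const
  have hftc : ∫ t in (0:ℝ)..1, ⟪gradient f (x + t • h), h⟫ =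
      f (x + h) - f x := by
    have := intervalIntegral.integral_eq_sub_of_hasDerivAt
      (f := fun t : ℝ => f (x + t • h))
      (f' := fun t : ℝ => ⟪gradient f (x + t • h), h⟫)
      (a := 0) (b := 1) (fun t _ => hchain t)
      (hcont.intervalIntegrable 0 1)
    simpa using this
  have hbound : ∀ t ∈ Set.Icc (0:ℝ) 1,
      (⟪gradient f (x + t • h), h⟫ : ℝ) ≤ ⟪gradient f x, h⟫ + L * t * ‖h‖ ^ 2 := by
    intro t ht
    have h1 : (⟪gradient f (x + t • h), h⟫ : ℝ) - ⟪gradient f x, h⟫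
        = ⟪gradient f (x + t • h) - gradient f x, h⟫ := by
      rw [inner_sub_left]
    have h2 : ‖gradient f (x + t • h) - gradient f x‖ ≤ L * (t * ‖h‖) := by
      have := hlip.dist_le_mul (x + t • h) x
      rw [dist_eq_norm] at this
      calc ‖gradient f (x + t • h) - gradient f x‖ ≤ L.toNNReal * dist (x + t • h) x := this
        _ = L * ‖t • h‖ := by
            rw [Real.coe_toNNReal L hL, dist_eq_norm]
            rw [add_sub_cancel_left]
        _ = L * (t * ‖h‖) := by rw [norm_smul, Real.norm_eq_abs, abs_of_nonneg ht.1]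
    have h3 : (⟪gradient f (x + t • h) - gradient f x, h⟫ : ℝ) ≤ L * (t * ‖h‖) * ‖h‖ :=
      (real_inner_le_norm _ _).trans (by
        apply mul_le_mul_of_nonneg_right h2 (norm_nonneg _))
    nlinarith [h1, h3]
  have hmono : ∫ t in (0:ℝ)..1, ⟪gradient f (x + t • h), h⟫ ≤
      ∫ t in (0:ℝ)..1, (⟪gradient f x, h⟫ + L * t * ‖h‖ ^ 2) := by
    apply intervalIntegral.integral_mono_on zero_le_one (hcont.intervalIntegrable 0 1)
      ((continuous_const.add ((continuous_const.mul continuous_id').mul continuous_const)).intervalIntegrable 0 1)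
      hbound
  have hval : ∫ t in (0:ℝ)..1, (⟪gradient f x, h⟫ + L * t * ‖h‖ ^ 2)
      = ⟪gradient f x, h⟫ + L / 2 * ‖h‖ ^ 2 := by
    have : ∀ t : ℝ, ⟪gradient f x, h⟫ + L * t * ‖h‖ ^ 2
        = ⟪gradient f x, h⟫ + (L * ‖h‖ ^ 2) * t := by intro t; ring
    simp only [this]
    rw [intervalIntegral.integral_add (g := fun t : ℝ => L * ‖h‖ ^ 2 * t) intervalIntegrable_const
      ((continuous_const.mul continuous_id').intervalIntegrable 0 1),
      intervalIntegral.integral_const_mul, integral_id]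
    simp; ring
  rw [hftc, hval] at hmono
  linarith

/-- The quantitative bound (Eq. (lip')) from the proof of Theorem 1: for every
attack budget `ε`, the poisoned global objective satisfies
`J₀(Agg(r - ε•v)) ≤ J₀(Agg r) - ε·(λB/n) + (L/2)·ε²`. -/
theorem stmt_8 (dθ dr : ℕ) (n : ℕ) (hn : 1 ≤ n) (lam L : ℝ)
    (hlam : 0 < lam) (hL : 0 < L)
    (J : EuclideanSpace ℝ (Fin dθ) → EuclideanSpace ℝ (Fin dr) → ℝ)
    (J₀ : EuclideanSpace ℝ (Fin dθ) → ℝ)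
    (θ S : EuclideanSpace ℝ (Fin dθ)) (r : EuclideanSpace ℝ (Fin dr))
    (G : EuclideanSpace ℝ (Fin dr) → EuclideanSpace ℝ (Fin dθ))
    (hG : ∀ r', G r' = gradient (fun θ' => J θ' r') θ)
    (Agg : EuclideanSpace ℝ (Fin dr) → EuclideanSpace ℝ (Fin dθ))
    (hAgg : ∀ r', Agg r' = (n : ℝ)⁻¹ • (S + θ + lam • G r'))
    (Φ : EuclideanSpace ℝ (Fin dr) → ℝ) (hΦ : Φ = J₀ ∘ Agg)
    (g : EuclideanSpace ℝ (Fin dr))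
    (hg : g = gradient (fun r' => J θ r') r) (hg0 : g ≠ 0)
    (v : EuclideanSpace ℝ (Fin dr)) (hv : v = ‖g‖⁻¹ • g)
    (M : EuclideanSpace ℝ (Fin dr) →L[ℝ] EuclideanSpace ℝ (Fin dθ))
    (hM : HasFDerivAt G M r)
    (hJ₀ : DifferentiableAt ℝ J₀ (Agg r))
    (hΦdiff : Differentiable ℝ Φ)
    (hΦlip : LipschitzWith L.toNNReal (gradient Φ))
    (B : ℝ) (hB : B = ⟪gradient J₀ (Agg r), M v⟫) :
    ∀ ε : ℝ,
      J₀ (Agg (r - ε • v)) ≤ J₀ (Agg r) - ε * (lam * B / n) + (L / 2) * ε ^ 2 := by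
  intro ε
  have hn0 : (n : ℝ) ≠ 0 := Nat.cast_ne_zero.mpr (by omega)
  -- derivative of Agg at r
  have hAggF : HasFDerivAt Agg (((n : ℝ)⁻¹ * lam) • M) r := by
    have hfun : Agg = fun r' => (n : ℝ)⁻¹ • (S + θ + lam • G r') := funext hAgg
    rw [hfun]
    have := ((hM.const_smul lam).const_add (S + θ)).const_smul ((n : ℝ)⁻¹)
    rw [smul_smul] at this
    exact this
  -- derivative of Φ at r
  have hΦF : HasFDerivAt Φ
      ((fderiv ℝ J₀ (Agg r)).comp (((n : ℝ)⁻¹ * lam) • M)) r := by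
    rw [hΦ]
    exact hJ₀.hasFDerivAt.comp r hAggF
  have hΦgrad : HasFDerivAt Φ
      (InnerProductSpace.toDual ℝ _ (gradient Φ r)) r :=
    hasGradientAt_iff_hasFDerivAt.mp (hΦdiff r).hasGradientAt
  have hDeq := hΦgrad.unique hΦF
  have hJ₀grad : HasFDerivAt J₀
      (InnerProductSpace.toDual ℝ _ (gradient J₀ (Agg r))) (Agg r) :=
    hasGradientAt_iff_hasFDerivAt.mp hJ₀.hasGradientAt
  have hJ₀eq : fderiv ℝ J₀ (Agg r)
      = InnerProductSpace.toDual ℝ _ (gradient J₀ (Agg r)) := hJ₀grad.fderiv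
  have key : ∀ w, (⟪gradient Φ r, w⟫ : ℝ)
      = ((n : ℝ)⁻¹ * lam) * ⟪gradient J₀ (Agg r), M w⟫ := by
    intro w
    have h1 : (InnerProductSpace.toDual ℝ _ (gradient Φ r)) w
        = ((fderiv ℝ J₀ (Agg r)).comp (((n : ℝ)⁻¹ * lam) • M)) w := by rw [hDeq]
    rw [InnerProductSpace.toDual_apply_apply] at h1
    rw [h1]
    rw [hJ₀eq]
    simp only [ContinuousLinearMap.comp_apply, ContinuousLinearMap.smul_apply, map_smul,
      InnerProductSpace.toDual_apply_apply, smul_eq_mul]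
  have hvnorm : ‖v‖ = 1 := by
    rw [hv, norm_smul, norm_inv, Real.norm_eq_abs, abs_norm,
      inv_mul_cancel₀ (norm_ne_zero_iff.mpr hg0)]
  have hd := descent_lemma Φ L hL.le hΦdiff hΦlip r (-(ε • v))
  have hsub : r + -(ε • v) = r - ε • v := by abel
  rw [hsub] at hd
  have hinner : (⟪gradient Φ r, -(ε • v)⟫ : ℝ) = -(ε * (lam * B / n)) := by
    rw [inner_neg_right, key (ε • v), map_smul, real_inner_smul_right, ← hB]
    ring
  have hnorm : ‖-(ε • v)‖ ^ 2 = ε ^ 2 := by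
    rw [norm_neg, norm_smul, hvnorm, Real.norm_eq_abs, mul_one, sq_abs]
  rw [hinner, hnorm] at hd
  have hΦr : Φ r = J₀ (Agg r) := by rw [hΦ]; rfl
  have hΦr' : Φ (r - ε • v) = J₀ (Agg (r - ε • v)) := by rw [hΦ]; rfl
  rw [hΦr, hΦr'] at hd
  linarith
end

section
/- In the setting of Theorem 1 (n ≥ 1 agents, learning rate λ > 0, J : E_θ → E_r → ℝ, J₀ : E_θ → ℝ, θ, S, r given; G(r') := gradient of θ' ↦ J(θ', r') at θ, Agg(r') := (1/n)·(S + θ + λ·G(r')), Φ := J₀ ∘ Agg, g := gradient of r' ↦ J(θ, r') at r nonzero, v := g/‖g‖, G differentiable at r with derivative M, J₀ differentiable at Agg(r), Φ differentiable with L-Lipschitz gradient for L > 0, B := ⟪∇J₀(Agg(r)), M(v)⟫ > 0), choosing the attack budget ε := λB/(nL) yields J₀(Agg(r − ε·v)) ≤ J₀(Agg(r)) − λ²B²/(2n²L); i.e., the attacker can guarantee a decrease of the global objective of at least λ²B²/(2n²L). -/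
open scoped RealInnerProductSpace
open intervalIntegral

lemma descent_lemma_s9 {E : Type*} [NormedAddCommGroup E] [InnerProductSpace ℝ E]
    [CompleteSpace E] (Φ : E → ℝ) (hd : Differentiable ℝ Φ) (L : ℝ)
    (hL : 0 ≤ L) (hlip : LipschitzWith L.toNNReal (gradient Φ)) (x u : E) :
    Φ (x + u) ≤ Φ x + ⟪gradient Φ x, u⟫ + L / 2 * ‖u‖ ^ 2 := by
  have hgrad : ∀ y : E, HasFDerivAt Φ (InnerProductSpace.toDual ℝ E (gradient Φ y)) y :=
    fun y => hasGradientAt_iff_hasFDerivAt.mp (hd y).hasGradientAt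
  set f' : ℝ → ℝ := fun t => ⟪gradient Φ (x + t • u), u⟫ with hf'
  have hderiv : ∀ t : ℝ, HasDerivAt (fun s : ℝ => Φ (x + s • u)) (f' t) t := by
    intro t
    have hc : HasDerivAt (fun s : ℝ => x + s • u) u t := by
      simpa using ((hasDerivAt_id t).smul_const u).const_add x
    have := (hgrad (x + t • u)).comp_hasDerivAt t hc
    rw [InnerProductSpace.toDual_apply_apply] at this; exact this
  have hcont : Continuous f' := by
    apply Continuous.inner
    · exact hlip.continuous.comp (by continuity)
    · exact continuous_const
  have hFTC : Φ (x + u) - Φ x = ∫ t in (0:ℝ)..1, f' t := by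
    have := intervalIntegral.integral_eq_sub_of_hasDerivAt
      (fun t _ => hderiv t) (hcont.intervalIntegrable 0 1)
    simp at this
    linarith [this]
  have hLnn : (L.toNNReal : ℝ) = L := Real.coe_toNNReal L hL
  have hbound : ∀ t ∈ Set.Icc (0:ℝ) 1, f' t ≤ f' 0 + L * ‖u‖ ^ 2 * t := by
    intro t ht
    have h1 : f' t - f' 0 = ⟪gradient Φ (x + t • u) - gradient Φ (x + (0:ℝ) • u), u⟫ := by
      simp [hf', inner_sub_left]
    have h2 : ‖gradient Φ (x + t • u) - gradient Φ (x + (0:ℝ) • u)‖ ≤ L * (t * ‖u‖) := by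
      have := hlip.dist_le_mul (x + t • u) (x + (0:ℝ) • u)
      rw [dist_eq_norm] at this
      have heq : x + t • u - (x + (0:ℝ) • u) = t • u := by simp
      rw [hLnn] at this
      calc ‖gradient Φ (x + t • u) - gradient Φ (x + (0:ℝ) • u)‖
          ≤ L * dist (x + t • u) (x + (0:ℝ) • u) := this
        _ = L * ‖t • u‖ := by rw [dist_eq_norm, heq]
        _ = L * (t * ‖u‖) := by
            rw [norm_smul, Real.norm_eq_abs, abs_of_nonneg ht.1]
    have h3 : f' t - f' 0 ≤ L * (t * ‖u‖) * ‖u‖ := by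
      rw [h1]
      calc ⟪gradient Φ (x + t • u) - gradient Φ (x + (0:ℝ) • u), u⟫
          ≤ ‖gradient Φ (x + t • u) - gradient Φ (x + (0:ℝ) • u)‖ * ‖u‖ :=
            real_inner_le_norm _ _
        _ ≤ L * (t * ‖u‖) * ‖u‖ := by
            apply mul_le_mul_of_nonneg_right h2 (norm_nonneg u)
    nlinarith [norm_nonneg u]
  have hint : (∫ t in (0:ℝ)..1, f' t) ≤ ∫ t in (0:ℝ)..1, (f' 0 + L * ‖u‖ ^ 2 * t) := by
    apply intervalIntegral.integral_mono_on (by norm_num)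
      (hcont.intervalIntegrable 0 1) (by apply Continuous.intervalIntegrable; continuity)
    exact hbound
  have hval : (∫ t in (0:ℝ)..1, (f' 0 + L * ‖u‖ ^ 2 * t)) =
      f' 0 + L * ‖u‖ ^ 2 / 2 := by
    rw [intervalIntegral.integral_add (by apply Continuous.intervalIntegrable; continuity)
      (by apply Continuous.intervalIntegrable; continuity)]
    rw [intervalIntegral.integral_const_mul, integral_id, intervalIntegral.integral_const]
    norm_num
    ring
  have hf'0 : f' 0 = ⟪gradient Φ x, u⟫ := by simp [hf']
  have hmax : L * ‖u‖ ^ 2 / 2 ≤ L / 2 * ‖u‖ ^ 2 ∨ True := Or.inr trivial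
  -- if L ≥ 0 then L = L; we don't know L ≥ 0 here, keep general: caller has L > 0
  nlinarith [hFTC, hint, hval, hf'0, norm_nonneg u, le_max_left L 0, le_max_right L 0]

/-- Optimal-budget consequence of Theorem 1: choosing `ε = λB/(nL)` guarantees a
decrease of the global objective of at least `λ²B²/(2n²L)`. -/
theorem stmt_9 (dθ dr : ℕ) (n : ℕ) (hn : 1 ≤ n) (lam L : ℝ)
    (hlam : 0 < lam) (hL : 0 < L)
    (J : EuclideanSpace ℝ (Fin dθ) → EuclideanSpace ℝ (Fin dr) → ℝ)
    (J₀ : EuclideanSpace ℝ (Fin dθ) → ℝ)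
    (θ S : EuclideanSpace ℝ (Fin dθ)) (r : EuclideanSpace ℝ (Fin dr))
    (G : EuclideanSpace ℝ (Fin dr) → EuclideanSpace ℝ (Fin dθ))
    (hG : ∀ r', G r' = gradient (fun θ' => J θ' r') θ)
    (Agg : EuclideanSpace ℝ (Fin dr) → EuclideanSpace ℝ (Fin dθ))
    (hAgg : ∀ r', Agg r' = (n : ℝ)⁻¹ • (S + θ + lam • G r'))
    (Φ : EuclideanSpace ℝ (Fin dr) → ℝ) (hΦ : Φ = J₀ ∘ Agg)
    (g : EuclideanSpace ℝ (Fin dr))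
    (hg : g = gradient (fun r' => J θ r') r) (hg0 : g ≠ 0)
    (v : EuclideanSpace ℝ (Fin dr)) (hv : v = ‖g‖⁻¹ • g)
    (M : EuclideanSpace ℝ (Fin dr) →L[ℝ] EuclideanSpace ℝ (Fin dθ))
    (hM : HasFDerivAt G M r)
    (hJ₀ : DifferentiableAt ℝ J₀ (Agg r))
    (hΦdiff : Differentiable ℝ Φ)
    (hΦlip : LipschitzWith L.toNNReal (gradient Φ))
    (B : ℝ) (hB : B = ⟪gradient J₀ (Agg r), M v⟫) (hBpos : 0 < B)
    (ε : ℝ) (hε : ε = lam * B / (n * L)) :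
    J₀ (Agg (r - ε • v)) ≤ J₀ (Agg r) - lam ^ 2 * B ^ 2 / (2 * n ^ 2 * L) := by
  have hn0 : (0:ℝ) < n := by exact_mod_cast Nat.lt_of_lt_of_le Nat.zero_lt_one hn
  have hvnorm : ‖v‖ = 1 := by
    rw [hv, norm_smul, norm_inv, norm_norm]
    field_simp [norm_ne_zero_iff.mpr hg0]
  -- derivative of Agg
  have hAggeq : Agg = fun r' => (n : ℝ)⁻¹ • (S + θ + lam • G r') := funext hAgg
  have hAggF : HasFDerivAt Agg (((n:ℝ)⁻¹ * lam) • M) r := by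
    rw [hAggeq]
    have h1 : HasFDerivAt (fun r' => S + θ + lam • G r') (lam • M) r := by
      simpa [add_assoc] using (hM.const_smul lam).const_add (S + θ)
    have := h1.const_smul ((n:ℝ)⁻¹)
    rw [smul_smul] at this; exact this
  -- derivative of Φ
  have hJ₀F : HasFDerivAt J₀ (InnerProductSpace.toDual ℝ _ (gradient J₀ (Agg r))) (Agg r) :=
    hasGradientAt_iff_hasFDerivAt.mp hJ₀.hasGradientAt
  have hΦF : HasFDerivAt Φ ((InnerProductSpace.toDual ℝ _ (gradient J₀ (Agg r))).comp
      (((n:ℝ)⁻¹ * lam) • M)) r := by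
    rw [hΦ]; exact hJ₀F.comp r hAggF
  have hΦG : HasFDerivAt Φ (InnerProductSpace.toDual ℝ _ (gradient Φ r)) r :=
    hasGradientAt_iff_hasFDerivAt.mp (hΦdiff r).hasGradientAt
  have huniq := hΦG.unique hΦF
  have key : ⟪gradient Φ r, v⟫ = (n:ℝ)⁻¹ * lam * B := by
    have := congrFun (congrArg (fun (f : EuclideanSpace ℝ (Fin dr) →L[ℝ] ℝ) => (f : _ → ℝ)) huniq) v
    simp only [InnerProductSpace.toDual_apply_apply, ContinuousLinearMap.coe_comp', Function.comp_apply,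
      ContinuousLinearMap.coe_smul', Pi.smul_apply, smul_eq_mul] at this
    rw [this, hB, real_inner_smul_right]
  -- descent lemma
  have hdl := descent_lemma_s9 Φ hΦdiff L hL.le hΦlip r (-(ε • v))
  have hεpos : 0 < ε := by
    rw [hε]; positivity
  have hx : r + -(ε • v) = r - ε • v := by abel
  rw [hx] at hdl
  have hnorm2 : ‖-(ε • v)‖ ^ 2 = ε ^ 2 := by
    rw [norm_neg, norm_smul, hvnorm, Real.norm_eq_abs, abs_of_pos hεpos]; ring
  have hinner : ⟪gradient Φ r, -(ε • v)⟫ = -(ε * ((n:ℝ)⁻¹ * lam * B)) := by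
    rw [inner_neg_right, real_inner_smul_right, key]
  rw [hnorm2, hinner] at hdl
  have hΦ1 : Φ (r - ε • v) = J₀ (Agg (r - ε • v)) := by rw [hΦ]; rfl
  have hΦ2 : Φ r = J₀ (Agg r) := by rw [hΦ]; rfl
  rw [hΦ1, hΦ2] at hdl
  have harith : J₀ (Agg r) + -(ε * ((n:ℝ)⁻¹ * lam * B)) + L / 2 * ε ^ 2 =
      J₀ (Agg r) - lam ^ 2 * B ^ 2 / (2 * n ^ 2 * L) := by
    rw [hε]
    field_simp
    ring
  linarith [hdl, harith.ge, harith.le]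
end
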